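/- Fix integers M ≥ 2 and N ≥ 1 and a subset V ⊆ {1,...,N}. Define a sequence p : {1,...,(M-1)^N} → {1,...,M-1} recursively: p(t) = t for t ≤ M-1 if 1 ∈ V, and p(t) = 1 for t ≤ M-1 if 1 ∉ V; for each n from 2 to N and i from 1 to M-2, for j ∈ {1,...,(M-1)^(n-1)}, set p(i·(M-1)^(n-1) + j) = Mod(p(j) + i, M-1) if n ∈ V, and p(i·(M-1)^(n-1) + j) = p(j) if n ∉ V. Then for every n ∈ {1,...,N}, every h ∈ {0,...,(M-1)^(N-n)-1}, i ∈ {0,...,M-2}, j ∈ {1,...,(M-1)^(n-1)}, writing t(h,i,j) = h·(M-1)^n + i·(M-1)^(n-1) + j: if n ∉ V then p(t(h,0,j)) = p(t(h,1,j)) = ... = p(t(h,M-2,j)); and if n ∈ V then p(t(h,i,j)) = Mod(p(t(h,0,j)) + i, M-1) for all i. -/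

import Mathlib

/-- `Mod(a,m)`: the unique element of `{1,...,m}` congruent to `a` mod `m`
(for `a ≥ 1`, `m ≥ 1`). -/
def shiftedModNat (a m : ℕ) : ℕ := (a - 1) % m + 1

lemma quot_lemma (m n k a b : ℕ) (hm : 1 ≤ m) (hb : b < m ^ n) (hk : n ≤ k) :
    (a * m ^ n + b) / m ^ k = a / m ^ (k - n) := by
  have h1 : m ^ k = m ^ n * m ^ (k - n) := by
    rw [← pow_add]; congr 1; omega
  have hpos : 0 < m ^ n := Nat.pow_pos hm
  rw [h1, ← Nat.div_div_eq_div_mul, Nat.mul_comm a, Nat.mul_add_div hpos,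
    Nat.div_eq_of_lt hb, Nat.add_zero]

lemma digit_lemma (m n k a b : ℕ) (hm : 1 ≤ m) (hb : b < m ^ n) :
    (a * m ^ n + b) / m ^ k % m =
      if k < n then b / m ^ k % m else a / m ^ (k - n) % m := by
  split
  · next hk =>
    have h1 : m ^ n = m ^ (n - k - 1) * m * m ^ k := by
      rw [mul_assoc, ← pow_succ', ← pow_add]; congr 1; omega
    have hpos : 0 < m ^ k := Nat.pow_pos hm
    rw [h1, ← mul_assoc, Nat.add_comm, Nat.add_mul_div_right _ _ hpos,
      ← mul_assoc, Nat.add_mul_mod_self_right]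
  · next hk =>
    rw [quot_lemma m n k a b hm hb (by omega)]


def dSum (m N : ℕ) (V : Finset ℕ) (t : ℕ) : ℕ :=
  ∑ k ∈ V ∩ Finset.Icc 1 N, (t - 1) / m ^ (k - 1) % m

lemma p_eq (m N : ℕ) (hm : 1 ≤ m) (hN : 1 ≤ N)
    (V : Finset ℕ) (p : ℕ → ℕ)
    (hbase : ∀ t, 1 ≤ t → t ≤ m → p t = if 1 ∈ V then t else 1)
    (hstep : ∀ n, 2 ≤ n → n ≤ N → ∀ i, 1 ≤ i → i ≤ m - 1 →
      ∀ j, 1 ≤ j → j ≤ m ^ (n - 1) →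
      p (i * m ^ (n - 1) + j)
        = if n ∈ V then shiftedModNat (p j + i) m else p j) :
    ∀ t, 1 ≤ t → t ≤ m ^ N →
      p t = dSum m N V t % m + 1 := by
  intro t
  induction t using Nat.strong_induction_on with
  | _ t IH =>
    intro ht1 htN
    by_cases hsmall : t ≤ m
    · -- base case
      rw [hbase t ht1 hsmall]
      have hdig : ∀ k ∈ V ∩ Finset.Icc 1 N, (t - 1) / m ^ (k - 1) % m
          = if k = 1 then (t - 1) % m else 0 := by
        intro k hk
        simp only [Finset.mem_inter, Finset.mem_Icc] at hk
        rcases eq_or_ne k 1 with rfl | hk1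
        · simp
        · have hk2 : 2 ≤ k := by omega
          have : t - 1 < m ^ (k - 1) := by
            calc t - 1 < m := by omega
            _ = m ^ 1 := (pow_one m).symm
            _ ≤ m ^ (k - 1) := Nat.pow_le_pow_right hm (by omega)
          simp [hk1, Nat.div_eq_of_lt this]
      rw [dSum, Finset.sum_congr rfl hdig, Finset.sum_ite_eq']
      have h1Icc : (1 : ℕ) ∈ Finset.Icc 1 N := by simp [hN]
      by_cases h1V : 1 ∈ V
      · have : (1:ℕ) ∈ V ∩ Finset.Icc 1 N := Finset.mem_inter.mpr ⟨h1V, h1Icc⟩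
        rw [if_pos h1V, if_pos this]
        have ht1m : t - 1 < m := by omega
        rw [Nat.mod_eq_of_lt ht1m, Nat.mod_eq_of_lt ht1m]; omega
      · have : (1:ℕ) ∉ V ∩ Finset.Icc 1 N := by
          simp [Finset.mem_inter, h1V]
        rw [if_neg h1V, if_neg this]; simp
    · -- inductive step
      push_neg at hsmall
      have hex : ∃ n, t ≤ m ^ n := ⟨N, htN⟩
      obtain ⟨n, hn_def⟩ : ∃ n, n = Nat.find hex := ⟨_, rfl⟩
      have hspec : t ≤ m ^ n := hn_def ▸ Nat.find_spec hex
      have hnN : n ≤ N := hn_def ▸ Nat.find_min' hex htN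
      have hmin : ∀ k, k < n → ¬ t ≤ m ^ k := by
        subst hn_def; exact fun k hk => Nat.find_min hex hk
      have hn2 : 2 ≤ n := by
        by_contra hc
        push_neg at hc
        have hle : m ^ n ≤ m := by
          calc m ^ n ≤ m ^ 1 := Nat.pow_le_pow_right hm (by omega)
          _ = m := pow_one m
        omega
      have hprev : m ^ (n - 1) < t := by
        have := hmin (n - 1) (by omega)
        omega
      have hqpos0 : 0 < m ^ (n - 1) := Nat.pow_pos hm
      have hqm0 : m * m ^ (n - 1) = m ^ n := by
        rw [← pow_succ']; congr 1; omega
      obtain ⟨q, hq_eq⟩ : ∃ q, m ^ (n - 1) = q := ⟨_, rfl⟩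
      have hqpos : 0 < q := hq_eq ▸ hqpos0
      have hqm : m * q = m ^ n := hq_eq ▸ hqm0
      have hprev' : q < t := hq_eq ▸ hprev
      obtain ⟨i, hi_def⟩ : ∃ i, i = (t - 1) / q := ⟨_, rfl⟩
      obtain ⟨j, hj_def⟩ : ∃ j, j = (t - 1) % q + 1 := ⟨_, rfl⟩
      have hmod := Nat.div_add_mod (t - 1) q
      have hmodlt := Nat.mod_lt (t - 1) hqpos
      have hij : i * q + j = t := by
        rw [hi_def, hj_def, Nat.mul_comm]; omega
      have hi1 : 1 ≤ i := by
        rw [hi_def]; exact (Nat.one_le_div_iff hqpos).mpr (by omega)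
      have him : i < m := by
        rw [hi_def]; exact (Nat.div_lt_iff_lt_mul hqpos).mpr (by omega)
      have hj1 : 1 ≤ j := by rw [hj_def]; omega
      have hjq : j ≤ q := by omega
      have hjt : j < t := by omega
      have hjN : j ≤ m ^ N := by
        calc j ≤ q := hjq
        _ = m ^ (n - 1) := hq_eq.symm
        _ ≤ m ^ N := Nat.pow_le_pow_right hm (by omega)
      have hpj : p j = dSum m N V j % m + 1 := IH j hjt hj1 hjN
      have hjq' : j ≤ m ^ (n - 1) := by rw [hq_eq]; exact hjq
      have hstep' := hstep n hn2 hnN i hi1 (by omega) j hj1 hjq'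
      rw [hq_eq, hij] at hstep'
      -- digit comparison
      have htdec : t - 1 = i * q + (j - 1) := by omega
      have hjlt : j - 1 < q := by omega
      have hjlt' : j - 1 < m ^ (n - 1) := by rw [hq_eq]; exact hjlt
      have hdig : ∀ k ∈ V ∩ Finset.Icc 1 N,
          (t - 1) / m ^ (k - 1) % m
            = (j - 1) / m ^ (k - 1) % m + if k = n then i else 0 := by
        intro k hk
        simp only [Finset.mem_inter, Finset.mem_Icc] at hk
        rw [htdec, ← hq_eq, digit_lemma m (n-1) (k-1) i (j-1) hm hjlt']
        rcases lt_trichotomy k n with hkn | hkn | hkn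
        · rw [if_pos (by omega), if_neg (by omega)]; simp
        · subst hkn
          rw [if_neg (by omega)]
          have h0 : k - 1 - (k - 1) = 0 := by omega
          rw [h0, pow_zero, Nat.div_one, if_pos rfl, Nat.mod_eq_of_lt him,
            Nat.div_eq_of_lt hjlt']
          simp
        · rw [if_neg (by omega), if_neg (by omega)]
          have hik : i / m ^ (k - 1 - (n - 1)) = 0 := by
            apply Nat.div_eq_of_lt
            calc i < m := him
            _ = m ^ 1 := (pow_one m).symm
            _ ≤ m ^ (k - 1 - (n - 1)) := Nat.pow_le_pow_right hm (by omega)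
          have hjk : (j - 1) / m ^ (k - 1) = 0 := by
            apply Nat.div_eq_of_lt
            calc j - 1 < m ^ (n - 1) := hjlt'
            _ ≤ m ^ (k - 1) := Nat.pow_le_pow_right hm (by omega)
          rw [hik, hjk]; simp
      have hsum : dSum m N V t = dSum m N V j + if n ∈ V then i else 0 := by
        rw [dSum, dSum, Finset.sum_congr rfl hdig, Finset.sum_add_distrib,
          Finset.sum_ite_eq']
        by_cases hnV : n ∈ V
        · rw [if_pos (Finset.mem_inter.mpr ⟨hnV, by simp; omega⟩), if_pos hnV]
        · rw [if_neg (by simp [Finset.mem_inter, hnV]), if_neg hnV]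
      rw [hstep', hsum]
      by_cases hnV : n ∈ V
      · rw [if_pos hnV, if_pos hnV, hpj, shiftedModNat]
        have h2 : dSum m N V j % m + 1 + i - 1 = dSum m N V j % m + i := by omega
        rw [h2, Nat.mod_add_mod]
      · rw [if_neg hnV, if_neg hnV, hpj]; simp


/-- Lemma 1 of the paper. Let `p` be the switching pattern produced by Algorithm 1,
characterized by: `p(t) = t` for `t ≤ M-1` if `1 ∈ V`, `p(t) = 1` for `t ≤ M-1` if
`1 ∉ V`, and for `2 ≤ n ≤ N`, `1 ≤ i ≤ M-2`, `1 ≤ j ≤ (M-1)^(n-1)`,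
`p(i·(M-1)^(n-1)+j) = Mod(p(j)+i, M-1)` if `n ∈ V` and `= p(j)` otherwise.
Then for `t(h,i,j) = h·(M-1)^n + i·(M-1)^(n-1) + j`: when `n ∉ V` the value
`p(t(h,i,j))` is constant in `i`, and when `n ∈ V` it equals
`Mod(p(t(h,0,j)) + i, M-1)`. -/
theorem switching_pattern_alignment (M N : ℕ) (hM : 2 ≤ M) (hN : 1 ≤ N)
    (V : Finset ℕ) (p : ℕ → ℕ)
    (hbase : ∀ t, 1 ≤ t → t ≤ M - 1 → p t = if 1 ∈ V then t else 1)
    (hstep : ∀ n, 2 ≤ n → n ≤ N → ∀ i, 1 ≤ i → i ≤ M - 2 →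
      ∀ j, 1 ≤ j → j ≤ (M - 1) ^ (n - 1) →
      p (i * (M - 1) ^ (n - 1) + j)
        = if n ∈ V then shiftedModNat (p j + i) (M - 1) else p j) :
    ∀ n, 1 ≤ n → n ≤ N → ∀ h, h ≤ (M - 1) ^ (N - n) - 1 →
      ∀ j, 1 ≤ j → j ≤ (M - 1) ^ (n - 1) → ∀ i, i ≤ M - 2 →
      p (h * (M - 1) ^ n + i * (M - 1) ^ (n - 1) + j)
        = if n ∈ V then
            shiftedModNat (p (h * (M - 1) ^ n + 0 * (M - 1) ^ (n - 1) + j) + i) (M - 1)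
          else p (h * (M - 1) ^ n + 0 * (M - 1) ^ (n - 1) + j) := by
  intro n hn1 hnN h hh j hj1 hjq i hiM
  have hm : 1 ≤ M - 1 := by omega
  have hstep' : ∀ n, 2 ≤ n → n ≤ N → ∀ i, 1 ≤ i → i ≤ (M - 1) - 1 →
      ∀ j, 1 ≤ j → j ≤ (M - 1) ^ (n - 1) →
      p (i * (M - 1) ^ (n - 1) + j)
        = if n ∈ V then shiftedModNat (p j + i) (M - 1) else p j :=
    fun n a b i c d => hstep n a b i c (by omega)
  have key := p_eq (M - 1) N hm hN V p hbase hstep'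
  have hpow1 : (M - 1) * (M - 1) ^ (n - 1) = (M - 1) ^ n := by
    rw [← pow_succ']; congr 1; omega
  have hpow2 : (M - 1) ^ n * (M - 1) ^ (N - n) = (M - 1) ^ N := by
    rw [← pow_add]; congr 1; omega
  have hC1 : 1 ≤ (M - 1) ^ (N - n) := Nat.one_le_pow _ _ (by omega)
  have hjlt : j - 1 < (M - 1) ^ (n - 1) := by omega
  have h4 : (M - 2) * (M - 1) ^ (n - 1) + (M - 1) ^ (n - 1) = (M - 1) ^ n := by
    calc (M - 2) * (M - 1) ^ (n - 1) + (M - 1) ^ (n - 1)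
        = ((M - 2) + 1) * (M - 1) ^ (n - 1) := (Nat.succ_mul _ _).symm
    _ = (M - 1) * (M - 1) ^ (n - 1) := by congr 1; omega
    _ = (M - 1) ^ n := hpow1
  have h5 : ((M - 1) ^ (N - n) - 1) * (M - 1) ^ n + (M - 1) ^ n = (M - 1) ^ N := by
    calc ((M - 1) ^ (N - n) - 1) * (M - 1) ^ n + (M - 1) ^ n
        = ((M - 1) ^ (N - n) - 1 + 1) * (M - 1) ^ n := (Nat.succ_mul _ _).symm
    _ = (M - 1) ^ (N - n) * (M - 1) ^ n := by congr 1; omega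
    _ = (M - 1) ^ N := by rw [Nat.mul_comm]; exact hpow2
  have hbound : ∀ i', i' ≤ M - 2 →
      h * (M - 1) ^ n + i' * (M - 1) ^ (n - 1) + j ≤ (M - 1) ^ N := by
    intro i' hi'
    have h1 : h * (M - 1) ^ n ≤ ((M - 1) ^ (N - n) - 1) * (M - 1) ^ n :=
      Nat.mul_le_mul_right _ hh
    have h2 : i' * (M - 1) ^ (n - 1) ≤ (M - 2) * (M - 1) ^ (n - 1) :=
      Nat.mul_le_mul_right _ hi'
    omega
  have hY : ∀ i', (h * (M - 1) + i') * (M - 1) ^ (n - 1)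
      = h * (M - 1) ^ n + i' * (M - 1) ^ (n - 1) := by
    intro i'; rw [Nat.add_mul, Nat.mul_assoc, hpow1]
  have hdec : ∀ i', h * (M - 1) ^ n + i' * (M - 1) ^ (n - 1) + j - 1
      = (h * (M - 1) + i') * (M - 1) ^ (n - 1) + (j - 1) := by
    intro i'; have := hY i'; omega
  have hform : ∀ i', i' < M - 1 → ∀ k, 1 ≤ k →
      (h * (M - 1) ^ n + i' * (M - 1) ^ (n - 1) + j - 1) / (M - 1) ^ (k - 1) % (M - 1)
        = if k < n then (j - 1) / (M - 1) ^ (k - 1) % (M - 1)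
          else if k = n then i'
          else h / (M - 1) ^ (k - n - 1) % (M - 1) := by
    intro i' hi' k hk
    rw [hdec i', digit_lemma (M - 1) (n - 1) (k - 1) _ (j - 1) hm hjlt]
    rcases lt_trichotomy k n with hkn | hkn | hkn
    · rw [if_pos (by omega), if_pos (by omega)]
    · subst hkn
      rw [if_neg (by omega), if_neg (by omega), if_pos rfl]
      have h0 : k - 1 - (k - 1) = 0 := by omega
      rw [h0, pow_zero, Nat.div_one, Nat.mul_add_mod', Nat.mod_eq_of_lt hi']
    · rw [if_neg (by omega), if_neg (by omega), if_neg (by omega)]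
      have e1 : k - 1 - (n - 1) = k - n := by omega
      have hq := quot_lemma (M - 1) 1 (k - n) h i' hm (by simpa using hi') (by omega)
      rw [pow_one] at hq
      rw [e1, hq]
  have ht1 : 1 ≤ h * (M - 1) ^ n + i * (M - 1) ^ (n - 1) + j := by omega
  have ht0 : 1 ≤ h * (M - 1) ^ n + 0 * (M - 1) ^ (n - 1) + j := by omega
  have hkey_i := key _ ht1 (hbound i hiM)
  have hkey_0 := key _ ht0 (hbound 0 (by omega))
  have hsum : dSum (M - 1) N V (h * (M - 1) ^ n + i * (M - 1) ^ (n - 1) + j)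
      = dSum (M - 1) N V (h * (M - 1) ^ n + 0 * (M - 1) ^ (n - 1) + j)
        + if n ∈ V then i else 0 := by
    rw [dSum, dSum]
    have hterm : ∀ k ∈ V ∩ Finset.Icc 1 N,
        (h * (M - 1) ^ n + i * (M - 1) ^ (n - 1) + j - 1) / (M - 1) ^ (k - 1) % (M - 1)
          = (h * (M - 1) ^ n + 0 * (M - 1) ^ (n - 1) + j - 1) / (M - 1) ^ (k - 1) % (M - 1)
            + if k = n then i else 0 := by
      intro k hk
      simp only [Finset.mem_inter, Finset.mem_Icc] at hk
      rw [hform i (by omega) k hk.2.1, hform 0 (by omega) k hk.2.1]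
      rcases lt_trichotomy k n with hkn | hkn | hkn
      · rw [if_pos hkn, if_pos hkn, if_neg (by omega)]; simp
      · subst hkn; simp
      · rw [if_neg (by omega), if_neg (by omega), if_neg (by omega),
          if_neg (by omega), if_neg (by omega)]; simp
    rw [Finset.sum_congr rfl hterm, Finset.sum_add_distrib, Finset.sum_ite_eq']
    by_cases hnV : n ∈ V
    · rw [if_pos (Finset.mem_inter.mpr ⟨hnV, by simp; omega⟩), if_pos hnV]
    · rw [if_neg (by simp [Finset.mem_inter, hnV]), if_neg hnV]
  rw [hkey_i, hkey_0, hsum]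
  by_cases hnV : n ∈ V
  · rw [if_pos hnV, if_pos hnV, shiftedModNat]
    have h2 : dSum (M - 1) N V (h * (M - 1) ^ n + 0 * (M - 1) ^ (n - 1) + j) % (M - 1)
        + 1 + i - 1
        = dSum (M - 1) N V (h * (M - 1) ^ n + 0 * (M - 1) ^ (n - 1) + j) % (M - 1) + i := by
      omega
    rw [h2, Nat.mod_add_mod]
  · simp only [if_neg hnV, Nat.add_zero]
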